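/- Let ν > −1 and let j_{ν,1} be the first positive zero of the Bessel function J_ν. For p ≤ (ν+1)/(ν+2) and all x in (0, j_{ν,1}), (1−p)/𝒥_{ν+1}(x) + p·𝒥_ν(x)/𝒥_{ν+1}(x) > 1. -/

import Mathlib

/-- The normalized Bessel function of the first kind,
`𝒥_ν(x) = 2^ν Γ(ν+1) x^{-ν} J_ν(x) = ∑ (-1/4)^n x^(2n) / ((ν+1)_n n!)`. -/
noncomputable def besselJn (ν x : ℝ) : ℝ :=
  ∑' n : ℕ, ((-1 / 4 : ℝ) ^ n * x ^ (2 * n)) * Real.Gamma (ν + 1) /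
    (Real.Gamma (ν + n + 1) * n.factorial)

noncomputable def bc (ν : ℝ) (n : ℕ) : ℝ :=
  (-1 / 4 : ℝ) ^ n * Real.Gamma (ν + 1) / (Real.Gamma (ν + n + 1) * n.factorial)

lemma gamma_pos (ν : ℝ) (hν : -1 < ν) (n : ℕ) : 0 < Real.Gamma (ν + n + 1) := by
  apply Real.Gamma_pos_of_pos
  have : (0:ℝ) ≤ n := Nat.cast_nonneg n
  linarith

lemma bc_zero (ν : ℝ) (hν : -1 < ν) : bc ν 0 = 1 := by
  have h := gamma_pos ν hν 0
  simp only [bc, pow_zero, Nat.cast_zero, Nat.factorial_zero, Nat.cast_one, mul_one, one_mul, add_zero] at h ⊢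
  field_simp

lemma bc_succ (ν : ℝ) (hν : -1 < ν) (n : ℕ) :
    bc ν (n + 1) = bc ν n * (-1 / 4) / ((ν + n + 1) * (n + 1)) := by
  have h1 : 0 < Real.Gamma (ν + n + 1) := gamma_pos ν hν n
  have h2 : (ν + n + 1) ≠ 0 := by have h0 : (0:ℝ) ≤ n := Nat.cast_nonneg n; intro h; linarith [h0]
  have key : Real.Gamma (ν + (n+1 : ℕ) + 1) = (ν + n + 1) * Real.Gamma (ν + n + 1) := by
    push_cast
    rw [show ν + ((n:ℝ)+1) + 1 = (ν + n + 1) + 1 by ring, Real.Gamma_add_one h2]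
  simp only [bc, key, Nat.factorial_succ]
  push_cast
  field_simp
  ring

lemma bc_shift (ν : ℝ) (hν : -1 < ν) (n : ℕ) :
    bc (ν + 1) n = bc ν n * (ν + 1) / (ν + n + 1) := by
  have h1 : 0 < Real.Gamma (ν + n + 1) := gamma_pos ν hν n
  have h2 : (ν + n + 1) ≠ 0 := by have h0 : (0:ℝ) ≤ n := Nat.cast_nonneg n; intro h; linarith [h0]
  have h3 : (ν + 1) ≠ 0 := by linarith
  have key : Real.Gamma (ν + 1 + n + 1) = (ν + n + 1) * Real.Gamma (ν + n + 1) := by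
    rw [show ν + 1 + (n:ℝ) + 1 = (ν + n + 1) + 1 by ring, Real.Gamma_add_one h2]
  have key2 : Real.Gamma (ν + 1 + 1) = (ν + 1) * Real.Gamma (ν + 1) := Real.Gamma_add_one h3
  simp only [bc, key, key2]
  field_simp

lemma bc_abs_succ (ν : ℝ) (hν : -1 < ν) (n : ℕ) :
    |bc ν (n + 1)| = |bc ν n| * (1/4) / ((ν + n + 1) * (n + 1)) := by
  have hpos : (0:ℝ) < (ν + n + 1) * (n + 1) := by
    have h0 : (0:ℝ) ≤ n := Nat.cast_nonneg n
    have : (0:ℝ) < ν + n + 1 := by linarith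
    positivity
  rw [bc_succ ν hν n, abs_div, abs_mul, abs_of_pos hpos,
    show |(-1/4 : ℝ)| = 1/4 from by norm_num]

lemma summable_u (ν : ℝ) (hν : -1 < ν) (R : ℝ) (hR : 0 ≤ R) :
    Summable (fun n : ℕ => |bc ν n| * (2 * (n:ℝ) + 2) * R ^ (2 * n + 1)) := by
  apply summable_of_ratio_norm_eventually_le (r := 1/2) (by norm_num)
  filter_upwards [Filter.eventually_ge_atTop (⌈R^2⌉₊ + 1)] with n hn
  have hn1 : 1 ≤ n := le_trans (Nat.le_add_left 1 _) hn
  have hnR : R^2 ≤ (n:ℝ) := by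
    calc R^2 ≤ (⌈R^2⌉₊ : ℝ) := Nat.le_ceil _
    _ ≤ (n:ℝ) := by exact_mod_cast le_trans (Nat.le_succ _) hn
  have h0 : (0:ℝ) ≤ n := Nat.cast_nonneg n
  have h1 : (1:ℝ) ≤ n := by exact_mod_cast hn1
  have hν1 : (0:ℝ) < ν + n + 1 := by linarith
  have hRpow : (0:ℝ) ≤ R ^ (2*n+1) := pow_nonneg hR _
  have habs : (0:ℝ) ≤ |bc ν n| := abs_nonneg _
  have hnorm : ∀ m : ℕ, ‖|bc ν m| * (2 * (m:ℝ) + 2) * R ^ (2 * m + 1)‖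
      = |bc ν m| * (2 * (m:ℝ) + 2) * R ^ (2 * m + 1) :=
    fun m => Real.norm_of_nonneg (by positivity)
  rw [hnorm, hnorm, bc_abs_succ ν hν n]
  have hexp : 2 * (n+1) + 1 = (2*n+1) + 2 := by ring
  rw [hexp, pow_add]
  push_cast
  rw [show |bc ν n| * (1/4) / ((ν + n + 1) * ((n:ℝ) + 1)) * (2 * ((n:ℝ)+1) + 2) * (R ^ (2*n+1) * R^2)
      = |bc ν n| * R ^ (2*n+1) * ((2 * ((n:ℝ)+1) + 2) * R^2 * (1/4) / ((ν + n + 1) * ((n:ℝ) + 1))) by ring]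
  rw [show (1:ℝ)/2 * (|bc ν n| * (2 * (n:ℝ) + 2) * R ^ (2 * n + 1))
      = |bc ν n| * R ^ (2*n+1) * ((n:ℝ) + 1) by ring]
  apply mul_le_mul_of_nonneg_left _ (by positivity)
  rw [div_le_iff₀ (by positivity)]
  nlinarith [sq_nonneg R, mul_le_mul_of_nonneg_left hnR (by linarith : (0:ℝ) ≤ 2*(n:ℝ)+4),
    mul_le_mul_of_nonneg_left (show (n:ℝ) ≤ ν + n + 1 from by linarith)
      (by positivity : (0:ℝ) ≤ ((n:ℝ)+1)^2)]

lemma bessel_eq (ν x : ℝ) : besselJn ν x = ∑' n : ℕ, bc ν n * x ^ (2 * n) := by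
  apply tsum_congr; intro n; rw [bc]; ring

lemma term_le_u (ν : ℝ) (x : ℝ) (n : ℕ) :
    ‖bc ν n * x ^ (2 * n)‖ ≤ |bc ν n| * (2 * (n:ℝ) + 2) * (|x| + 1) ^ (2 * n + 1) := by
  rw [norm_mul, Real.norm_eq_abs, Real.norm_eq_abs, abs_pow]
  have h1 : |x| ^ (2*n) ≤ (|x| + 1) ^ (2*n) :=
    pow_le_pow_left₀ (abs_nonneg x) (by linarith [abs_nonneg x]) _
  have h2 : (|x| + 1) ^ (2*n) ≤ (|x| + 1) ^ (2*n+1) :=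
    pow_le_pow_right₀ (by linarith [abs_nonneg x]) (Nat.le_succ _)
  have h3 : |x| ^ (2*n) ≤ (2 * (n:ℝ) + 2) * (|x| + 1) ^ (2*n+1) := by
    nlinarith [pow_nonneg (abs_nonneg x) (2*n), pow_nonneg (by linarith [abs_nonneg x] : (0:ℝ) ≤ |x|+1) (2*n+1), Nat.cast_nonneg (α := ℝ) n]
  calc |bc ν n| * |x| ^ (2*n) ≤ |bc ν n| * ((2 * (n:ℝ) + 2) * (|x| + 1) ^ (2*n+1)) :=
        mul_le_mul_of_nonneg_left h3 (abs_nonneg _)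
    _ = _ := by ring

lemma summable_term (ν : ℝ) (hν : -1 < ν) (x : ℝ) :
    Summable (fun n : ℕ => bc ν n * x ^ (2 * n)) := by
  apply Summable.of_norm
  exact Summable.of_nonneg_of_le (fun n => norm_nonneg _) (term_le_u ν x)
    (summable_u ν hν (|x| + 1) (by positivity))

lemma bessel_at_zero (ν : ℝ) (hν : -1 < ν) : besselJn ν 0 = 1 := by
  rw [bessel_eq]
  rw [tsum_eq_single 0 (by
    intro n hn
    rw [zero_pow (by omega : 2 * n ≠ 0), mul_zero])]
  rw [bc_zero ν hν, pow_zero, mul_one]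

lemma bessel_hasDeriv (ν : ℝ) (hν : -1 < ν) (x : ℝ) :
    HasDerivAt (besselJn ν) (-(x / (2 * (ν + 1))) * besselJn (ν + 1) x) x := by
  have hfun : besselJn ν = fun y => ∑' n : ℕ, bc ν n * y ^ (2 * n) := by
    funext y; exact bessel_eq ν y
  set R : ℝ := |x| + 1 with hR
  have hR1 : 1 ≤ R := by rw [hR]; linarith [abs_nonneg x]
  have hR0 : 0 < R := by linarith
  have hd : HasDerivAt (fun y => ∑' n : ℕ, bc ν n * y ^ (2 * n))
      (∑' n : ℕ, bc ν n * ((2*n : ℕ) * x ^ (2 * n - 1))) x := by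
    apply hasDerivAt_tsum_of_isPreconnected
      (u := fun n => |bc ν n| * (2 * (n:ℝ) + 2) * R ^ (2 * n + 1)) (y₀ := 0)
      (summable_u ν hν R (le_of_lt hR0))
      (Metric.isOpen_ball (x := (0:ℝ)) (ε := R))
      ((convex_ball (0:ℝ) R).isPreconnected)
      (fun n y _ => ((hasDerivAt_pow (2*n) y).const_mul (bc ν n)))
      ?_ ?_ ?_ ?_
    · intro n y hy
      have hyR : |y| ≤ R := by
        have := mem_ball_zero_iff.mp hy
        rw [Real.norm_eq_abs] at this; linarith
      rw [Real.norm_eq_abs, abs_mul, abs_mul, abs_pow]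
      have e1 : |((2*n : ℕ) : ℝ)| ≤ 2 * (n:ℝ) + 2 := by
        rw [abs_of_nonneg (Nat.cast_nonneg _)]; push_cast; linarith
      have e2 : |y| ^ (2*n - 1) ≤ R ^ (2*n + 1) := by
        calc |y| ^ (2*n-1) ≤ R ^ (2*n-1) := pow_le_pow_left₀ (abs_nonneg y) hyR _
          _ ≤ R ^ (2*n+1) := pow_le_pow_right₀ hR1 (by omega)
      calc |bc ν n| * (|((2*n : ℕ) : ℝ)| * |y| ^ (2*n-1))
          ≤ |bc ν n| * ((2 * (n:ℝ) + 2) * R ^ (2*n+1)) := by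
            apply mul_le_mul_of_nonneg_left _ (abs_nonneg _)
            apply mul_le_mul e1 e2 (pow_nonneg (abs_nonneg y) _)
            linarith
        _ = _ := by ring
    · exact Metric.mem_ball_self hR0
    · exact summable_term ν hν 0
    · rw [mem_ball_zero_iff, Real.norm_eq_abs]; linarith
  rw [hfun]
  convert hd using 1
  -- show the sum of derivatives equals the claimed formula
  have hsum : Summable (fun n : ℕ => bc ν n * ((2*n : ℕ) * x ^ (2 * n - 1))) := by
    apply Summable.of_norm
    apply Summable.of_nonneg_of_le (fun n => norm_nonneg _) _ (summable_u ν hν R (le_of_lt hR0))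
    intro n
    rw [Real.norm_eq_abs, abs_mul, abs_mul, abs_pow]
    have e1 : |((2*n : ℕ) : ℝ)| ≤ 2 * (n:ℝ) + 2 := by
      rw [abs_of_nonneg (Nat.cast_nonneg _)]; push_cast; linarith
    have e2 : |x| ^ (2*n - 1) ≤ R ^ (2*n + 1) := by
      calc |x| ^ (2*n-1) ≤ R ^ (2*n-1) :=
            pow_le_pow_left₀ (abs_nonneg x) (by rw [hR]; linarith) _
        _ ≤ R ^ (2*n+1) := pow_le_pow_right₀ hR1 (by omega)
    calc |bc ν n| * (|((2*n : ℕ) : ℝ)| * |x| ^ (2*n-1))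
        ≤ |bc ν n| * ((2 * (n:ℝ) + 2) * R ^ (2*n+1)) := by
          apply mul_le_mul_of_nonneg_left _ (abs_nonneg _)
          apply mul_le_mul e1 e2 (pow_nonneg (abs_nonneg x) _)
          linarith
      _ = _ := by ring
  rw [hsum.tsum_eq_zero_add]
  have hterm : ∀ n : ℕ, bc ν (n+1) * ((2*(n+1) : ℕ) * x ^ (2 * (n+1) - 1))
      = -(x / (2 * (ν + 1))) * (bc (ν+1) n * x ^ (2 * n)) := by
    intro n
    have hν1 : (ν + 1) ≠ 0 := by linarith
    have h0 : (0:ℝ) ≤ n := Nat.cast_nonneg n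
    have hνn : (ν + n + 1) ≠ 0 := by intro h; linarith
    have hn1 : ((n:ℝ) + 1) ≠ 0 := by positivity
    rw [bc_succ ν hν n, bc_shift ν hν n,
      show 2 * (n+1) - 1 = 2*n + 1 from by omega, pow_succ]
    push_cast
    field_simp
    ring
  rw [tsum_congr hterm, tsum_mul_left]
  simp [bessel_eq]

lemma bessel_rec (ν : ℝ) (hν : -1 < ν) (x : ℝ) :
    besselJn ν x - besselJn (ν + 1) x
      = -(x^2 / (4 * (ν + 1) * (ν + 2))) * besselJn (ν + 2) x := by
  have hν1 : -1 < ν + 1 := by linarith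
  have hs1 := summable_term ν hν x
  have hs2 := summable_term (ν+1) hν1 x
  rw [bessel_eq, bessel_eq, ← hs1.tsum_sub hs2]
  have hsd : Summable (fun n : ℕ => bc ν n * x ^ (2*n) - bc (ν+1) n * x ^ (2*n)) := hs1.sub hs2
  rw [hsd.tsum_eq_zero_add]
  have h00 : bc ν 0 * x ^ (2*0) - bc (ν+1) 0 * x ^ (2*0) = 0 := by
    rw [bc_zero ν hν, bc_zero (ν+1) hν1]; ring
  have hterm : ∀ n : ℕ, bc ν (n+1) * x ^ (2*(n+1)) - bc (ν+1) (n+1) * x ^ (2*(n+1))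
      = -(x^2 / (4 * (ν + 1) * (ν + 2))) * (bc (ν+2) n * x ^ (2*n)) := by
    intro n
    have h0 : (0:ℝ) ≤ n := Nat.cast_nonneg n
    have hν1' : (ν + 1) ≠ 0 := by linarith
    have hν2' : (ν + 2) ≠ 0 := by linarith
    have hνn : (ν + n + 1) ≠ 0 := by intro h; linarith
    have hνn2 : (ν + n + 2) ≠ 0 := by intro h; linarith
    have hn1 : ((n:ℝ) + 1) ≠ 0 := by positivity
    have e1 : bc (ν+1) (n+1) = bc (ν+1) n * (-1/4) / ((ν + 1 + n + 1) * (n+1)) :=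
      bc_succ (ν+1) hν1 n
    have hA : (ν + 1 + (n:ℝ) + 1) ≠ 0 := by intro h; linarith
    have e2 : bc (ν+2) n = bc (ν+1) n * (ν + 2) / (ν + 1 + n + 1) := by
      have h := bc_shift (ν+1) hν1 n
      rw [show ν + 1 + 1 = ν + 2 from by ring] at h
      exact h
    have e3 : bc (ν+1) n = bc ν n * (ν + 1) / (ν + n + 1) := bc_shift ν hν n
    rw [bc_succ ν hν n, e1, e2, e3,
      show 2*(n+1) = 2*n + 2 from by omega, pow_add]
    push_cast
    field_simp
    ring
  rw [tsum_congr hterm, h00, tsum_mul_left, zero_add, bessel_eq]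

lemma bessel_cont (ν : ℝ) (hν : -1 < ν) : Continuous (besselJn ν) := by
  rw [continuous_iff_continuousAt]
  exact fun x => (bessel_hasDeriv ν hν x).differentiableAt.continuousAt

lemma bessel_pos_succ (ν : ℝ) (hν : -1 < ν) {j : ℝ} (hj : 0 < j)
    (h : ∀ y, 0 < y → y < j → 0 < besselJn ν y) :
    ∀ y, 0 < y → y < j → 0 < besselJn (ν + 1) y := by
  have hν1 : -1 < ν + 1 := by linarith
  have hν1' : (0:ℝ) < ν + 1 := by linarith
  have hν2' : (0:ℝ) < ν + 2 := by linarith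
  have hcont : Continuous (besselJn (ν + 1)) := bessel_cont (ν+1) hν1
  by_contra hcon
  push_neg at hcon
  obtain ⟨y₀, hy₀0, hy₀j, hy₀⟩ := hcon
  set f := besselJn (ν + 1) with hf
  set Z := Set.Icc 0 y₀ ∩ {t : ℝ | f t ≤ 0} with hZ
  have hZc : IsClosed Z := isClosed_Icc.inter (isClosed_le hcont continuous_const)
  have hZne : Z.Nonempty := ⟨y₀, ⟨le_of_lt hy₀0, le_refl _⟩, hy₀⟩
  have hZbd : BddBelow Z := ⟨0, fun t ht => ht.1.1⟩
  have hyZ : sInf Z ∈ Z := hZc.csInf_mem hZne hZbd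
  set y := sInf Z with hy
  have hy0 : 0 ≤ y := hyZ.1.1
  have hyy₀ : y ≤ y₀ := hyZ.1.2
  have hyne : y ≠ 0 := by
    intro h0
    have h1 : f 0 = 1 := bessel_at_zero _ hν1
    have h2 : f y ≤ 0 := hyZ.2
    rw [h0, h1] at h2
    linarith
  have hypos : 0 < y := lt_of_le_of_ne hy0 (Ne.symm hyne)
  have hbefore : ∀ t, 0 < t → t < y → 0 < f t := by
    intro t ht0 hty
    by_contra hc; push_neg at hc
    have htZ : t ∈ Z := ⟨⟨le_of_lt ht0, le_trans (le_of_lt hty) hyy₀⟩, hc⟩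
    have := csInf_le hZbd htZ
    linarith
  have hfy0 : f y ≤ 0 := hyZ.2
  have hfyge : 0 ≤ f y := by
    have htd : Filter.Tendsto f (nhdsWithin y (Set.Iio y)) (nhds (f y)) :=
      (hcont.continuousWithinAt).tendsto
    apply ge_of_tendsto htd
    filter_upwards [Ioo_mem_nhdsLT_of_mem (⟨hypos, le_refl y⟩ : y ∈ Set.Ioc 0 y)] with t ht
    exact le_of_lt (hbefore t ht.1 ht.2)
  have hfy : f y = 0 := le_antisymm hfy0 hfyge
  have hyj : y < j := lt_of_le_of_lt hyy₀ hy₀j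
  have hνy : 0 < besselJn ν y := h y hypos hyj
  have hrec := bessel_rec ν hν y
  have hc4 : 0 < y^2 / (4*(ν+1)*(ν+2)) := by positivity
  have hJ2 : besselJn (ν + 2) y < 0 := by
    by_contra hc; push_neg at hc
    rw [← hf, hfy, sub_zero] at hrec
    nlinarith [mul_nonneg hc4.le hc]
  have hd := bessel_hasDeriv (ν+1) hν1 y
  rw [show ν + 1 + 1 = ν + 2 from by ring] at hd
  have hdpos : 0 < -(y / (2*(ν+2))) * besselJn (ν+2) y := by
    apply mul_pos_of_neg_of_neg _ hJ2
    have : 0 < y / (2*(ν+2)) := by positivity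
    linarith
  have hslope := hasDerivAt_iff_tendsto_slope.mp hd
  have hmono : nhdsWithin y (Set.Iio y) ≤ nhdsWithin y {y}ᶜ :=
    nhdsWithin_mono y (fun t ht => ne_of_lt ht)
  have htd2 := hslope.mono_left hmono
  have hle : -(y / (2*(ν+2))) * besselJn (ν+2) y ≤ 0 := by
    apply le_of_tendsto htd2
    filter_upwards [Ioo_mem_nhdsLT_of_mem (⟨hypos, le_refl y⟩ : y ∈ Set.Ioc 0 y)] with t ht
    rw [slope_def_field, ← hf, hfy, sub_zero]
    exact div_nonpos_of_nonneg_of_nonpos (hbefore t ht.1 ht.2).le (by linarith [ht.2])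
  linarith

theorem besselJ_huygens_lower (ν p j : ℝ) (hν : -1 < ν)
    (hj0 : 0 < j) (hjz : besselJn ν j = 0)
    (hjfirst : ∀ y : ℝ, 0 < y → y < j → besselJn ν y ≠ 0)
    (hp : p ≤ (ν + 1) / (ν + 2)) :
    ∀ x : ℝ, 0 < x → x < j →
      (1 - p) / besselJn (ν + 1) x + p * besselJn ν x / besselJn (ν + 1) x > 1 := by
  have hν1 : -1 < ν + 1 := by linarith
  have hν2 : -1 < ν + 2 := by linarith
  have hν1' : (0:ℝ) < ν + 1 := by linarith
  have hν2' : (0:ℝ) < ν + 2 := by linarith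
  have hν3' : (0:ℝ) < ν + 3 := by linarith
  -- positivity of J_ν on (0,j)
  have hpos0 : ∀ y, 0 < y → y < j → 0 < besselJn ν y := by
    intro y hy0 hyj
    by_contra hc; push_neg at hc
    have hcont : ContinuousOn (besselJn ν) (Set.Icc 0 y) := (bessel_cont ν hν).continuousOn
    have hmem : (0:ℝ) ∈ Set.Icc (besselJn ν y) (besselJn ν 0) := by
      rw [bessel_at_zero ν hν]
      exact ⟨hc, by norm_num⟩
    obtain ⟨t, htmem, htz⟩ := intermediate_value_Icc' (le_of_lt hy0) hcont hmem
    have ht0 : t ≠ 0 := by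
      intro h0; rw [h0, bessel_at_zero ν hν] at htz; norm_num at htz
    exact hjfirst t (lt_of_le_of_ne htmem.1 (Ne.symm ht0)) (lt_of_le_of_lt htmem.2 hyj) htz
  have hpos1 := bessel_pos_succ ν hν hj0 hpos0
  have hpos2 : ∀ y, 0 < y → y < j → 0 < besselJn (ν + 2) y := by
    have := bessel_pos_succ (ν+1) hν1 hj0 hpos1
    rw [show ν + 1 + 1 = ν + 2 from by ring] at this
    exact this
  have hpos3 : ∀ y, 0 < y → y < j → 0 < besselJn (ν + 3) y := by
    have := bessel_pos_succ (ν+2) hν2 hj0 hpos2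
    rw [show ν + 2 + 1 = ν + 3 from by ring] at this
    exact this
  intro x hx0 hxj
  have hD : 0 < besselJn (ν + 1) x := hpos1 x hx0 hxj
  -- the auxiliary function F
  set F : ℝ → ℝ := fun t => (ν+1) * besselJn ν t - (ν+2) * besselJn (ν+1) t + 1 with hF
  have hFd : ∀ t : ℝ, HasDerivAt F ((t/2) * (besselJn (ν+2) t - besselJn (ν+1) t)) t := by
    intro t
    have h1 := ((bessel_hasDeriv ν hν t).const_mul (ν+1)).sub
      ((bessel_hasDeriv (ν+1) hν1 t).const_mul (ν+2))
    rw [show ν + 1 + 1 = ν + 2 from by ring] at h1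
    have h3 := h1.add_const 1
    refine h3.congr_deriv ?_
    field_simp
    ring
  have hFd' : ∀ t : ℝ, 0 < t → t < j →
      0 < (t/2) * (besselJn (ν+2) t - besselJn (ν+1) t) := by
    intro t ht0 htj
    have hrec := bessel_rec (ν+1) hν1 t
    rw [show ν + 1 + 1 = ν + 2 from by ring, show ν + 1 + 2 = ν + 3 from by ring] at hrec
    have h3 := hpos3 t ht0 htj
    have hq : (0:ℝ) < t^2 / (4*(ν+2)*(ν+3)) := by positivity
    nlinarith [mul_pos hq h3]
  have hFcont : Continuous F := by
    apply Continuous.add _ continuous_const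
    exact (continuous_const.mul (bessel_cont ν hν)).sub
      (continuous_const.mul (bessel_cont (ν+1) hν1))
  have hFmono : StrictMonoOn F (Set.Icc 0 x) := by
    apply strictMonoOn_of_deriv_pos (convex_Icc 0 x) hFcont.continuousOn
    intro t ht
    rw [interior_Icc] at ht
    rw [(hFd t).deriv]
    exact hFd' t ht.1 (lt_trans ht.2 hxj)
  have hF0 : F 0 = 0 := by
    rw [hF]; simp only [bessel_at_zero ν hν, bessel_at_zero (ν+1) hν1]; ring
  have hFx : 0 < F x := by
    have := hFmono (Set.left_mem_Icc.mpr (le_of_lt hx0))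
      (Set.right_mem_Icc.mpr (le_of_lt hx0)) hx0
    rw [hF0] at this; exact this
  -- J_ν x < 1
  have hanti : StrictAntiOn (besselJn ν) (Set.Icc 0 x) := by
    apply strictAntiOn_of_deriv_neg (convex_Icc 0 x) (bessel_cont ν hν).continuousOn
    intro t ht
    rw [interior_Icc] at ht
    rw [(bessel_hasDeriv ν hν t).deriv]
    have h1 := hpos1 t ht.1 (lt_trans ht.2 hxj)
    have : 0 < t / (2*(ν+1)) := div_pos ht.1 (by linarith)
    nlinarith
  have hJlt : besselJn ν x < 1 := by
    have := hanti (Set.left_mem_Icc.mpr (le_of_lt hx0))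
      (Set.right_mem_Icc.mpr (le_of_lt hx0)) hx0
    rw [bessel_at_zero ν hν] at this; exact this
  -- conclude
  rw [← add_div, gt_iff_lt, lt_div_iff₀ hD, one_mul]
  have hpb : p * (ν+2) ≤ ν + 1 := (le_div_iff₀ hν2').mp hp
  have hmul : (ν+1) * (besselJn ν x - 1) ≤ (p*(ν+2)) * (besselJn ν x - 1) :=
    mul_le_mul_of_nonpos_right hpb (by linarith)
  have hFx' : (ν+1) * besselJn ν x - (ν+2) * besselJn (ν+1) x + 1 > 0 := hFx
  have key : (ν+2) * besselJn (ν+1) x < (ν+2) * (1 - p + p * besselJn ν x) := by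
    rw [show (ν+2) * (1 - p + p * besselJn ν x)
        = (ν+2) + (p*(ν+2)) * (besselJn ν x - 1) from by ring]
    nlinarith
  have := (mul_lt_mul_iff_right₀ hν2').mp key
  linarith
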